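/- Let L be a loop with commutator-associator filtration (L_i). For a ∈ L_p and b,c with b ∈ L_p, c ∈ L_q, the commutator satisfies [ab,c] ≡ [a,c][b,c] mod L_{p+q+1}. Hence the commutator induces a well-defined bilinear operation L_p/L_{p+1} × L_q/L_{q+1} → L_{p+q}/L_{p+q+1} on the associated graded abelian group. -/
import Mathlib


/-- A loop: a quasigroup with a two-sided identity. -/
class Loop (α : Type*) extends Mul α, One α where
  ldiv : α → α → α
  rdiv : α → α → α
  one_mul : ∀ a : α, 1 * a = a
  mul_one : ∀ a : α, a * 1 = a
  mul_ldiv : ∀ a b : α, a * ldiv a b = b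
  ldiv_mul : ∀ a b : α, ldiv a (a * b) = b
  rdiv_mul : ∀ a b : α, rdiv a b * b = a
  mul_rdiv : ∀ a b : α, rdiv (a * b) b = a

namespace Loop

variable {α : Type*} [Loop α]

/-- The commutator `[a,b] = (ba)\(ab)`. -/
def comm (a b : α) : α := ldiv (b * a) (a * b)

/-- The associator `(a,b,c) = (a(bc))\((ab)c)`. -/
def assoc (a b c : α) : α := ldiv (a * (b * c)) ((a * b) * c)

/-- The associator deviation indexed by a list of indices `αs = [α_n, ..., α_1]`
(stored with the *last* index first) applied to a list of arguments.
Level `0` (empty index list) is the associator. -/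
def dev : List ℕ → List α → α
  | [], [a, b, c] => assoc a b c
  | (k :: rest), args =>
      let A : α → α := fun x => dev rest (args.take (k - 1) ++ x :: args.drop (k + 1))
      ldiv (A (args.getD (k - 1) 1) * A (args.getD k 1))
        (A (args.getD (k - 1) 1 * args.getD k 1))
  | _, _ => 1

/-- A subset is a subloop if it contains `1` and is closed under
multiplication and both divisions. -/
def IsSubloop (S : Set α) : Prop :=
  (1 : α) ∈ S ∧ ∀ a ∈ S, ∀ b ∈ S, a * b ∈ S ∧ ldiv a b ∈ S ∧ rdiv a b ∈ S

/-- A subloop is normal if `xN = Nx`, `(Nx)y = N(xy)` and `y(xN) = (yx)N`. -/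
def IsNormal (S : Set α) : Prop :=
  IsSubloop S ∧
  (∀ x : α, {z | ∃ n ∈ S, z = x * n} = {z | ∃ n ∈ S, z = n * x}) ∧
  (∀ x y : α, {z | ∃ n ∈ S, z = (n * x) * y} = {z | ∃ n ∈ S, z = n * (x * y)}) ∧
  (∀ x y : α, {z | ∃ n ∈ S, z = y * (x * n)} = {z | ∃ n ∈ S, z = (y * x) * n})

/-- `N/M` is central in `L/M`: all commutators and associators involving an
element of `N` lie in `M`. -/
def CentralMod (N M : Set α) : Prop :=
  ∀ n ∈ N, ∀ x y : α,
    comm n x ∈ M ∧ comm x n ∈ M ∧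
    assoc n x y ∈ M ∧ assoc x n y ∈ M ∧ assoc x y n ∈ M

/-- `[N,L]`: the smallest normal subloop `M` such that `N/M` is central in `L/M`. -/
def bracket (N : Set α) : Set α := ⋂₀ {M | IsNormal M ∧ CentralMod N M}

end Loop

/-- The lower central series of a loop: `γ 1 = L`, `γ (i+1) = [γ i, L]`. -/
def Loop.gamma (α : Type*) [Loop α] : ℕ → Set α
  | 0 => Set.univ
  | 1 => Set.univ
  | (n + 2) => Loop.bracket (Loop.gamma α (n + 1))

namespace Loop

variable {α : Type*} [Loop α]

/-- A family `M i` of normal subloops is admissible for the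
commutator-associator filtration. -/
def Admissible (M : ℕ → Set α) : Prop :=
  (∀ i, IsNormal (M i)) ∧ M 1 = Set.univ ∧
  (∀ i p q, 1 ≤ p → 1 ≤ q → i ≤ p + q →
    ∀ a ∈ M p, ∀ b ∈ M q, comm a b ∈ M i) ∧
  (∀ i p q r, 1 ≤ p → 1 ≤ q → 1 ≤ r → i ≤ p + q + r →
    ∀ a ∈ M p, ∀ b ∈ M q, ∀ c ∈ M r, assoc a b c ∈ M i) ∧
  (∀ (i : ℕ) (idx ps : List ℕ) (xs : List α), idx ≠ [] →
    ps.length = idx.length + 3 → xs.length = idx.length + 3 →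
    (∀ j < idx.length, 1 ≤ idx.getD j 0 ∧ idx.getD j 0 ≤ (idx.length - j) + 2) →
    (∀ j < ps.length, 1 ≤ ps.getD j 0 ∧ xs.getD j 1 ∈ M (ps.getD j 0)) →
    i ≤ ps.sum → dev idx xs ∈ M i)

/-- The commutator-associator filtration: the smallest admissible family. -/
def casub (α : Type*) [Loop α] (i : ℕ) : Set α :=
  ⋂₀ {S | ∃ M : ℕ → Set α, Admissible M ∧ S = M i}

/-- Congruence modulo a (normal) subloop: `x ≡ y mod N` iff `x ∈ yN`. -/
def ModEq (N : Set α) (x y : α) : Prop := ∃ n ∈ N, x = y * n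

/-- Loop homomorphisms: maps preserving multiplication. -/
def IsLoopHom {β : Type*} [Loop β] (φ : α → β) : Prop :=
  ∀ a b : α, φ (a * b) = φ a * φ b

/-- The subloop generated by a subset. -/
def closure (S : Set α) : Set α := ⋂₀ {T | IsSubloop T ∧ S ⊆ T}

/-- Left-normed powers: `ypow y m = ((...(yy)y)...)y`. -/
def ypow (y : α) : ℕ → α
  | 0 => 1
  | (m + 1) => ypow y m * y

end Loop

section Higman

variable {L B : Type*} [Loop L] [AddCommGroup B]

/-- Multiplication in Higman's loop `(L, B)`. -/
def hmul (f : L → L → B) (x y : L × B) : L × B :=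
  (x.1 * y.1, x.2 + y.2 + f x.1 y.1)

/-- Left division in Higman's loop: `(l2,b2)\(l1,b1) = (l2\l1, b1-b2-f(l2, l2\l1))`. -/
def hldiv (f : L → L → B) (x y : L × B) : L × B :=
  (Loop.ldiv x.1 y.1, y.2 - x.2 - f x.1 (Loop.ldiv x.1 y.1))

/-- Right division in Higman's loop: `(l1,b1)/(l2,b2) = (l1/l2, b1-b2-f(l1/l2, l2))`. -/
def hrdiv (f : L → L → B) (x y : L × B) : L × B :=
  (Loop.rdiv x.1 y.1, x.2 - y.2 - f (Loop.rdiv x.1 y.1) y.1)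

/-- The commutator in Higman's loop. -/
def hcomm (f : L → L → B) (x y : L × B) : L × B :=
  hldiv f (hmul f y x) (hmul f x y)

/-- The associator in Higman's loop. -/
def hassoc (f : L → L → B) (x y z : L × B) : L × B :=
  hldiv f (hmul f x (hmul f y z)) (hmul f (hmul f x y) z)

end Higman

namespace CommBilinAux

open Loop

variable {α : Type*} [Loop α]

theorem comm_mul (a b : α) : (b * a) * comm a b = a * b := mul_ldiv _ _

theorem assoc_mul (x y z : α) : (x * (y * z)) * assoc x y z = (x * y) * z := mul_ldiv _ _

/-- An intersection of normal subloops is normal. -/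
theorem isNormal_sInter {S : Set (Set α)} (h : ∀ T ∈ S, IsNormal T) :
    IsNormal (⋂₀ S) := by
  refine ⟨⟨fun T hT => (h T hT).1.1, ?_⟩, ?_, ?_, ?_⟩
  · intro a ha b hb
    refine ⟨fun T hT => ((h T hT).1.2 a (ha T hT) b (hb T hT)).1,
      fun T hT => ((h T hT).1.2 a (ha T hT) b (hb T hT)).2.1,
      fun T hT => ((h T hT).1.2 a (ha T hT) b (hb T hT)).2.2⟩
  · intro x
    ext z
    constructor
    · rintro ⟨n, hn, rfl⟩
      refine ⟨rdiv (x * n) x, fun T hT => ?_, (rdiv_mul _ _).symm⟩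
      have : x * n ∈ {z | ∃ m ∈ T, z = x * m} := ⟨n, hn T hT, rfl⟩
      rw [(h T hT).2.1 x] at this
      obtain ⟨m, hm, hme⟩ := this
      rw [hme, mul_rdiv]; exact hm
    · rintro ⟨n, hn, rfl⟩
      refine ⟨ldiv x (n * x), fun T hT => ?_, (mul_ldiv _ _).symm⟩
      have : n * x ∈ {z | ∃ m ∈ T, z = m * x} := ⟨n, hn T hT, rfl⟩
      rw [← (h T hT).2.1 x] at this
      obtain ⟨m, hm, hme⟩ := this
      rw [hme, ldiv_mul]; exact hm
  · intro x y
    ext z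
    constructor
    · rintro ⟨n, hn, rfl⟩
      refine ⟨rdiv ((n * x) * y) (x * y), fun T hT => ?_, (rdiv_mul _ _).symm⟩
      have : (n * x) * y ∈ {z | ∃ m ∈ T, z = (m * x) * y} := ⟨n, hn T hT, rfl⟩
      rw [(h T hT).2.2.1 x y] at this
      obtain ⟨m, hm, hme⟩ := this
      rw [hme, mul_rdiv]; exact hm
    · rintro ⟨n, hn, rfl⟩
      refine ⟨rdiv (rdiv (n * (x * y)) y) x, fun T hT => ?_, ?_⟩
      · have : n * (x * y) ∈ {z | ∃ m ∈ T, z = m * (x * y)} := ⟨n, hn T hT, rfl⟩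
        rw [← (h T hT).2.2.1 x y] at this
        obtain ⟨m, hm, hme⟩ := this
        rw [hme, mul_rdiv, mul_rdiv]; exact hm
      · rw [rdiv_mul, rdiv_mul]
  · intro x y
    ext z
    constructor
    · rintro ⟨n, hn, rfl⟩
      refine ⟨ldiv (y * x) (y * (x * n)), fun T hT => ?_, (mul_ldiv _ _).symm⟩
      have : y * (x * n) ∈ {z | ∃ m ∈ T, z = y * (x * m)} := ⟨n, hn T hT, rfl⟩
      rw [(h T hT).2.2.2 x y] at this
      obtain ⟨m, hm, hme⟩ := this
      rw [hme, ldiv_mul]; exact hm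
    · rintro ⟨n, hn, rfl⟩
      refine ⟨ldiv x (ldiv y ((y * x) * n)), fun T hT => ?_, ?_⟩
      · have : (y * x) * n ∈ {z | ∃ m ∈ T, z = (y * x) * m} := ⟨n, hn T hT, rfl⟩
        rw [← (h T hT).2.2.2 x y] at this
        obtain ⟨m, hm, hme⟩ := this
        rw [hme, ldiv_mul, ldiv_mul]; exact hm
      · rw [mul_ldiv, mul_ldiv]

theorem isNormal_casub (i : ℕ) : IsNormal (casub α i) := by
  apply isNormal_sInter
  rintro T ⟨M, hM, rfl⟩
  exact hM.1 i

theorem mem_casub_one (x : α) : x ∈ casub α 1 := by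
  rintro T ⟨M, hM, rfl⟩
  rw [hM.2.1]; trivial

theorem comm_mem_casub {i p q : ℕ} (hp : 1 ≤ p) (hq : 1 ≤ q) (hle : i ≤ p + q)
    {a b : α} (ha : a ∈ casub α p) (hb : b ∈ casub α q) : comm a b ∈ casub α i := by
  rintro T ⟨M, hM, rfl⟩
  exact hM.2.2.1 i p q hp hq hle a (ha _ ⟨M, hM, rfl⟩) b (hb _ ⟨M, hM, rfl⟩)

theorem assoc_mem_casub {i p q r : ℕ} (hp : 1 ≤ p) (hq : 1 ≤ q) (hr : 1 ≤ r)
    (hle : i ≤ p + q + r) {a b c : α} (ha : a ∈ casub α p) (hb : b ∈ casub α q)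
    (hc : c ∈ casub α r) : assoc a b c ∈ casub α i := by
  rintro T ⟨M, hM, rfl⟩
  exact hM.2.2.2.1 i p q r hp hq hr hle a (ha _ ⟨M, hM, rfl⟩) b (hb _ ⟨M, hM, rfl⟩)
    c (hc _ ⟨M, hM, rfl⟩)

section ModEqLemmas

variable {N : Set α}

-- transfer lemmas from normality
theorem transfer1 (hN : IsNormal N) {n : α} (hn : n ∈ N) (x : α) : ∃ m ∈ N, x * n = m * x := by
  have : x * n ∈ {z | ∃ m ∈ N, z = x * m} := ⟨n, hn, rfl⟩
  rw [hN.2.1 x] at this; exact this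

theorem transfer2 (hN : IsNormal N) {n : α} (hn : n ∈ N) (x : α) : ∃ m ∈ N, n * x = x * m := by
  have : n * x ∈ {z | ∃ m ∈ N, z = m * x} := ⟨n, hn, rfl⟩
  rw [← hN.2.1 x] at this; exact this

theorem transferB (hN : IsNormal N) {n : α} (hn : n ∈ N) (x y : α) : ∃ m ∈ N, (n * x) * y = m * (x * y) := by
  have : (n * x) * y ∈ {z | ∃ m ∈ N, z = (m * x) * y} := ⟨n, hn, rfl⟩
  rw [hN.2.2.1 x y] at this; exact this

theorem transferC (hN : IsNormal N) {n : α} (hn : n ∈ N) (x y : α) : ∃ m ∈ N, y * (x * n) = (y * x) * m := by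
  have : y * (x * n) ∈ {z | ∃ m ∈ N, z = y * (x * m)} := ⟨n, hn, rfl⟩
  rw [hN.2.2.2 x y] at this; exact this

theorem transferC' (hN : IsNormal N) {n : α} (hn : n ∈ N) (x y : α) : ∃ m ∈ N, (y * x) * n = y * (x * m) := by
  have : (y * x) * n ∈ {z | ∃ m ∈ N, z = (y * x) * m} := ⟨n, hn, rfl⟩
  rw [← hN.2.2.2 x y] at this; exact this

theorem modeq_refl (hN : IsNormal N) (x : α) : ModEq N x x := ⟨1, hN.1.1, (Loop.mul_one x).symm⟩

theorem modeq_symm (hN : IsNormal N) {x y : α} (h : ModEq N x y) : ModEq N y x := by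
  obtain ⟨n, hn, rfl⟩ := h
  obtain ⟨n1, hn1, he1⟩ := transfer1 hN hn y
  have hn0 : rdiv 1 n1 ∈ N := (hN.1.2 1 hN.1.1 n1 hn1).2.2
  obtain ⟨m, hm, hme⟩ := transferB hN hn0 n1 y
  rw [rdiv_mul, Loop.one_mul] at hme
  obtain ⟨m', hm', hme'⟩ := transfer2 hN hm (n1 * y)
  exact ⟨m', hm', by rw [he1]; exact hme.trans hme'⟩

theorem modeq_trans (hN : IsNormal N) {x y z : α} (h1 : ModEq N x y) (h2 : ModEq N y z) : ModEq N x z := by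
  obtain ⟨n, hn, rfl⟩ := h1
  obtain ⟨m, hm, rfl⟩ := h2
  obtain ⟨k, hk, hke⟩ := transferC' hN hn m z
  exact ⟨m * k, (hN.1.2 m hm k hk).1, hke⟩

theorem modeq_mul_right (hN : IsNormal N) {x y : α} (w : α) (h : ModEq N x y) : ModEq N (x * w) (y * w) := by
  obtain ⟨n, hn, rfl⟩ := h
  obtain ⟨n1, hn1, he1⟩ := transfer1 hN hn y
  obtain ⟨n2, hn2, he2⟩ := transferB hN hn1 y w
  obtain ⟨n3, hn3, he3⟩ := transfer2 hN hn2 (y * w)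
  exact ⟨n3, hn3, by rw [he1, he2, he3]⟩

theorem modeq_mul_left (hN : IsNormal N) {x y : α} (w : α) (h : ModEq N x y) : ModEq N (w * x) (w * y) := by
  obtain ⟨n, hn, rfl⟩ := h
  obtain ⟨m, hm, hme⟩ := transferC hN hn y w
  exact ⟨m, hm, hme⟩

theorem modeq_cancel (hN : IsNormal N) {x x' y y' : α} (hx : ModEq N x x')
    (h : ModEq N (x * y) (x' * y')) : ModEq N y y' := by
  have h1 : ModEq N (x' * y) (x' * y') :=
    modeq_trans hN (modeq_symm hN (modeq_mul_right hN y hx)) h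
  obtain ⟨k, hk, hke⟩ := h1
  obtain ⟨m, hm, hme⟩ := transferC' hN hk y' x'
  rw [hme] at hke
  refine ⟨m, hm, ?_⟩
  have := congrArg (ldiv x') hke
  rwa [ldiv_mul, ldiv_mul] at this

theorem modeq_assoc_right {x y z : α} (h : assoc x y z ∈ N) :
    ModEq N ((x * y) * z) (x * (y * z)) := ⟨_, h, (assoc_mul x y z).symm⟩

theorem modeq_comm {a b : α} (h : comm a b ∈ N) : ModEq N (a * b) (b * a) :=
  ⟨_, h, (comm_mul a b).symm⟩

end ModEqLemmas

/-- Master lemma: left linearity of the commutator modulo N. -/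
theorem masterA {N : Set α} (hN : IsNormal N) (a b c : α)
    (h1 : assoc a b c ∈ N) (h2 : assoc a c b ∈ N) (h3 : assoc c a b ∈ N)
    (h4 : assoc a (c * b) (comm b c) ∈ N)
    (h5 : assoc (c * a) (comm a c) b ∈ N)
    (h6 : comm (comm a c) b ∈ N)
    (h7 : assoc (c * a) b (comm a c) ∈ N)
    (h8 : assoc ((c * a) * b) (comm a c) (comm b c) ∈ N) :
    ModEq N (comm (a * b) c) (comm a c * comm b c) := by
  set K1 := comm b c with hK1
  set K2 := comm a c with hK2
  have e1 : ModEq N ((a * b) * c) (a * (b * c)) := modeq_assoc_right h1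
  have e2 : a * (b * c) = a * ((c * b) * K1) := by rw [comm_mul]
  have e3 : ModEq N (a * ((c * b) * K1)) ((a * (c * b)) * K1) :=
    modeq_symm hN (modeq_assoc_right h4)
  have e4 : ModEq N ((a * (c * b)) * K1) (((a * c) * b) * K1) :=
    modeq_mul_right hN K1 (modeq_symm hN (modeq_assoc_right h2))
  have e5 : (a * c) * b = ((c * a) * K2) * b := by rw [comm_mul]
  have e6a : ModEq N (((c * a) * K2) * b) ((c * a) * (K2 * b)) := modeq_assoc_right h5
  have e6b : ModEq N ((c * a) * (K2 * b)) ((c * a) * (b * K2)) :=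
    modeq_mul_left hN (c * a) (modeq_comm h6)
  have e6c : ModEq N ((c * a) * (b * K2)) (((c * a) * b) * K2) :=
    modeq_symm hN (modeq_assoc_right h7)
  have e6 : ModEq N (((a * c) * b) * K1) ((((c * a) * b) * K2) * K1) := by
    rw [e5]
    exact modeq_mul_right hN K1 (modeq_trans hN e6a (modeq_trans hN e6b e6c))
  have e7 : ModEq N ((((c * a) * b) * K2) * K1) (((c * a) * b) * (K2 * K1)) :=
    modeq_assoc_right h8
  have big : ModEq N ((a * b) * c) (((c * a) * b) * (K2 * K1)) := by
    rw [e2] at e1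
    exact modeq_trans hN e1 (modeq_trans hN e3 (modeq_trans hN e4 (modeq_trans hN e6 e7)))
  have e8 : ModEq N (c * (a * b)) ((c * a) * b) := modeq_symm hN (modeq_assoc_right h3)
  have hdef : (c * (a * b)) * comm (a * b) c = (a * b) * c := comm_mul (a * b) c
  exact modeq_cancel hN e8 (by rw [hdef]; exact big)

/-- Master lemma: right linearity of the commutator modulo N. -/
theorem masterB {N : Set α} (hN : IsNormal N) (a c c' : α)
    (g1 : assoc a c c' ∈ N)
    (g2 : assoc (c * a) (comm a c) c' ∈ N)
    (g3 : comm (comm a c) c' ∈ N)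
    (g4 : assoc (c * a) c' (comm a c) ∈ N)
    (g5 : assoc c a c' ∈ N)
    (g6 : assoc c (c' * a) (comm a c') ∈ N)
    (g7 : assoc c c' a ∈ N)
    (g8 : assoc ((c * c') * a) (comm a c') (comm a c) ∈ N)
    (g9 : comm (comm a c') (comm a c) ∈ N) :
    ModEq N (comm a (c * c')) (comm a c * comm a c') := by
  set K2 := comm a c with hK2
  set K3 := comm a c' with hK3
  have e1 : ModEq N (a * (c * c')) ((a * c) * c') := modeq_symm hN (modeq_assoc_right g1)
  have e2 : (a * c) * c' = ((c * a) * K2) * c' := by rw [comm_mul]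
  have e3 : ModEq N (((c * a) * K2) * c') ((c * a) * (K2 * c')) := modeq_assoc_right g2
  have e4 : ModEq N ((c * a) * (K2 * c')) ((c * a) * (c' * K2)) :=
    modeq_mul_left hN (c * a) (modeq_comm g3)
  have e5 : ModEq N ((c * a) * (c' * K2)) (((c * a) * c') * K2) :=
    modeq_symm hN (modeq_assoc_right g4)
  have e6 : ModEq N (((c * a) * c') * K2) ((c * (a * c')) * K2) :=
    modeq_mul_right hN K2 (modeq_assoc_right g5)
  have e7 : c * (a * c') = c * ((c' * a) * K3) := by rw [comm_mul]
  have e8 : ModEq N (c * ((c' * a) * K3)) ((c * (c' * a)) * K3) :=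
    modeq_symm hN (modeq_assoc_right g6)
  have e9 : ModEq N ((c * (c' * a)) * K3) (((c * c') * a) * K3) :=
    modeq_mul_right hN K3 (modeq_symm hN (modeq_assoc_right g7))
  have e10 : ModEq N ((((c * c') * a) * K3) * K2) (((c * c') * a) * (K3 * K2)) :=
    modeq_assoc_right g8
  have e11 : ModEq N (((c * c') * a) * (K3 * K2)) (((c * c') * a) * (K2 * K3)) :=
    modeq_mul_left hN _ (modeq_comm g9)
  have big : ModEq N (a * (c * c')) (((c * c') * a) * (K2 * K3)) := by
    refine modeq_trans hN e1 ?_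
    rw [e2]
    refine modeq_trans hN e3 (modeq_trans hN e4 (modeq_trans hN e5 (modeq_trans hN e6 ?_)))
    rw [e7]
    exact modeq_trans hN (modeq_mul_right hN K2 e8)
      (modeq_trans hN (modeq_mul_right hN K2 e9) (modeq_trans hN e10 e11))
  have hdef : ((c * c') * a) * comm a (c * c') = a * (c * c') := comm_mul a (c * c')
  exact modeq_cancel hN (modeq_refl hN ((c * c') * a)) (by rw [hdef]; exact big)


theorem masterA_casub {s t u m : ℕ} (hs : 1 ≤ s) (ht : 1 ≤ t) (hu : 1 ≤ u)
    (hm1 : m ≤ s + t + u) (hm2 : m ≤ s + u + 1) (hm3 : m ≤ t + u + 1)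
    {a b c : α} (ha : a ∈ casub α s) (hb : b ∈ casub α t) (hc : c ∈ casub α u) :
    ModEq (casub α m) (comm (a * b) c) (comm a c * comm b c) := by
  have hcb : comm b c ∈ casub α (t + u) := comm_mem_casub ht hu le_rfl hb hc
  have hca : comm a c ∈ casub α (s + u) := comm_mem_casub hs hu le_rfl ha hc
  apply masterA (isNormal_casub m)
  · exact assoc_mem_casub hs ht hu (by omega) ha hb hc
  · exact assoc_mem_casub hs hu ht (by omega) ha hc hb
  · exact assoc_mem_casub hu hs ht (by omega) hc ha hb
  · exact assoc_mem_casub hs le_rfl (by omega) (by omega) ha (mem_casub_one _) hcb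
  · exact assoc_mem_casub le_rfl (by omega) ht (by omega) (mem_casub_one _) hca hb
  · exact comm_mem_casub (by omega) ht (by omega) hca hb
  · exact assoc_mem_casub le_rfl ht (by omega) (by omega) (mem_casub_one _) hb hca
  · exact assoc_mem_casub le_rfl (by omega) (by omega) (by omega) (mem_casub_one _) hca hcb

theorem masterB_casub {s u v m : ℕ} (hs : 1 ≤ s) (hu : 1 ≤ u) (hv : 1 ≤ v)
    (hm1 : m ≤ s + u + v) (hm2 : m ≤ s + u + 1) (hm3 : m ≤ s + v + 1)
    {a c c' : α} (ha : a ∈ casub α s) (hc : c ∈ casub α u) (hc' : c' ∈ casub α v) :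
    ModEq (casub α m) (comm a (c * c')) (comm a c * comm a c') := by
  have hca : comm a c ∈ casub α (s + u) := comm_mem_casub hs hu le_rfl ha hc
  have hca' : comm a c' ∈ casub α (s + v) := comm_mem_casub hs hv le_rfl ha hc'
  apply masterB (isNormal_casub m)
  · exact assoc_mem_casub hs hu hv (by omega) ha hc hc'
  · exact assoc_mem_casub le_rfl (by omega) hv (by omega) (mem_casub_one _) hca hc'
  · exact comm_mem_casub (by omega) hv (by omega) hca hc'
  · exact assoc_mem_casub le_rfl hv (by omega) (by omega) (mem_casub_one _) hc' hca
  · exact assoc_mem_casub hu hs hv (by omega) hc ha hc'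
  · exact assoc_mem_casub hu le_rfl (by omega) (by omega) hc (mem_casub_one _) hca'
  · exact assoc_mem_casub hu hv hs (by omega) hc hc' ha
  · exact assoc_mem_casub le_rfl (by omega) (by omega) (by omega) (mem_casub_one _) hca' hca
  · exact comm_mem_casub (by omega) (by omega) (by omega) hca' hca

end CommBilinAux

/-- for `a, b ∈ L_p` and `c ∈ L_q`, the commutator satisfies
`[ab,c] ≡ [a,c][b,c] mod L_{p+q+1}` (and similarly in the second argument);
moreover `[a,c] ∈ L_{p+q}` and the class of `[a,c]` modulo `L_{p+q+1}` only
depends on the classes of `a` mod `L_{p+1}` and `c` mod `L_{q+1}`, so the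
commutator induces a well-defined bilinear operation
`L_p/L_{p+1} × L_q/L_{q+1} → L_{p+q}/L_{p+q+1}`. -/
theorem commutator_bilinear {L : Type*} [Loop L] (p q : ℕ) (hp : 1 ≤ p) (hq : 1 ≤ q)
    (a b : L) (ha : a ∈ Loop.casub L p) (hb : b ∈ Loop.casub L p)
    (c c' : L) (hc : c ∈ Loop.casub L q) (hc' : c' ∈ Loop.casub L q) :
    Loop.comm a c ∈ Loop.casub L (p + q) ∧
    Loop.ModEq (Loop.casub L (p + q + 1))
      (Loop.comm (a * b) c) (Loop.comm a c * Loop.comm b c) ∧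
    Loop.ModEq (Loop.casub L (p + q + 1))
      (Loop.comm a (c * c')) (Loop.comm a c * Loop.comm a c') ∧
    (∀ a' ∈ Loop.casub L p, Loop.ModEq (Loop.casub L (p + 1)) a a' →
      Loop.ModEq (Loop.casub L (p + q + 1)) (Loop.comm a c) (Loop.comm a' c)) ∧
    (Loop.ModEq (Loop.casub L (q + 1)) c c' →
      Loop.ModEq (Loop.casub L (p + q + 1)) (Loop.comm a c) (Loop.comm a c')) := by
  have hN := CommBilinAux.isNormal_casub (α := L) (p + q + 1)
  refine ⟨CommBilinAux.comm_mem_casub hp hq le_rfl ha hc, ?_, ?_, ?_, ?_⟩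
  · exact CommBilinAux.masterA_casub (m := p + q + 1) hp hp hq (by omega) (by omega) (by omega) ha hb hc
  · exact CommBilinAux.masterB_casub (m := p + q + 1) hp hq hq (by omega) (by omega) (by omega) ha hc hc'
  · rintro a' ha' ⟨n, hn, rfl⟩
    have h1 := CommBilinAux.masterA_casub (m := p + q + 1) hp (show 1 ≤ p + 1 by omega) hq
      (by omega) (by omega) (by omega) ha' hn hc
    have h2 : Loop.comm n c ∈ Loop.casub L (p + q + 1) :=
      CommBilinAux.comm_mem_casub (show 1 ≤ p + 1 by omega) hq (by omega) hn hc
    exact CommBilinAux.modeq_trans hN h1 ⟨_, h2, rfl⟩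
  · rintro ⟨n, hn, rfl⟩
    have h1 := CommBilinAux.masterB_casub (m := p + q + 1) hp hq (show 1 ≤ q + 1 by omega)
      (by omega) (by omega) (by omega) ha hc' hn
    have h2 : Loop.comm a n ∈ Loop.casub L (p + q + 1) :=
      CommBilinAux.comm_mem_casub hp (show 1 ≤ q + 1 by omega) (by omega) ha hn
    exact CommBilinAux.modeq_trans hN h1 ⟨_, h2, rfl⟩
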